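/- Let φ : ℝ² → ℝ² be the map φ(r,θ) = (e^{−r/2}cos(θ/2), e^{−r/2}sin(θ/2)). Then for every point (r,θ) ∈ ℝ² and every tangent vector (α,β) ∈ ℝ², writing (A,B) = Dφ(r,θ)(α,β) for the image of (α,β) under the Fréchet derivative of φ and (u,v) = φ(r,θ), one has (A² + B²)/(1 + u² + v²) = (1/4)(α² + β²)/(1 + e^{r}). That is, φ pulls back the Ricci soliton (Witten black hole) metric g_Σ = (du² + dv²)/(1 + u² + v²) to the metric g₃ = (1/4)(dr² + dθ²)/(1 + e^{r}). -/

import Mathlib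

open Real

lemma hasFDerivAt_phi (r θ : ℝ) :
    HasFDerivAt (fun p : ℝ × ℝ =>
      (Real.exp (-p.1 / 2) * Real.cos (p.2 / 2), Real.exp (-p.1 / 2) * Real.sin (p.2 / 2)))
      (ContinuousLinearMap.prod
        ((-(1/2) * Real.exp (-r/2) * Real.cos (θ/2)) • ContinuousLinearMap.fst ℝ ℝ ℝ
          + (-(1/2) * Real.exp (-r/2) * Real.sin (θ/2)) • ContinuousLinearMap.snd ℝ ℝ ℝ)
        ((-(1/2) * Real.exp (-r/2) * Real.sin (θ/2)) • ContinuousLinearMap.fst ℝ ℝ ℝ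
          + ((1/2) * Real.exp (-r/2) * Real.cos (θ/2)) • ContinuousLinearMap.snd ℝ ℝ ℝ))
      (r, θ) := by
  have h1 : HasFDerivAt (fun p : ℝ × ℝ => -p.1 / 2)
      ((-(1/2) : ℝ) • ContinuousLinearMap.fst ℝ ℝ ℝ) (r, θ) := by
    have := ((-(1/2) : ℝ) • ContinuousLinearMap.fst ℝ ℝ ℝ).hasFDerivAt (x := (r, θ))
    convert this using 2 with p
    simp; ring
  have h2 : HasFDerivAt (fun p : ℝ × ℝ => p.2 / 2)
      (((1/2) : ℝ) • ContinuousLinearMap.snd ℝ ℝ ℝ) (r, θ) := by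
    have := (((1/2) : ℝ) • ContinuousLinearMap.snd ℝ ℝ ℝ).hasFDerivAt (x := (r, θ))
    convert this using 2 with p
    simp; ring
  have hexp : HasFDerivAt (fun p : ℝ × ℝ => Real.exp (-p.1 / 2))
      (Real.exp (-r/2) • ((-(1/2) : ℝ) • ContinuousLinearMap.fst ℝ ℝ ℝ)) (r, θ) :=
    by have := (Real.hasDerivAt_exp (-r/2)).comp_hasFDerivAt (r, θ) h1; exact this
  have hcos : HasFDerivAt (fun p : ℝ × ℝ => Real.cos (p.2 / 2))
      ((-Real.sin (θ/2)) • (((1/2) : ℝ) • ContinuousLinearMap.snd ℝ ℝ ℝ)) (r, θ) :=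
    by have := (Real.hasDerivAt_cos (θ/2)).comp_hasFDerivAt (r, θ) h2; exact this
  have hsin : HasFDerivAt (fun p : ℝ × ℝ => Real.sin (p.2 / 2))
      ((Real.cos (θ/2)) • (((1/2) : ℝ) • ContinuousLinearMap.snd ℝ ℝ ℝ)) (r, θ) :=
    by have := (Real.hasDerivAt_sin (θ/2)).comp_hasFDerivAt (r, θ) h2; exact this
  have hA := hexp.fun_mul hcos
  have hB := hexp.fun_mul hsin
  have h := HasFDerivAt.prodMk hA hB
  refine h.congr_fderiv ?_
  refine ContinuousLinearMap.ext fun w => Prod.ext ?_ ?_ <;>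
  · simp [ContinuousLinearMap.prod_apply, ContinuousLinearMap.smul_apply,
      ContinuousLinearMap.add_apply, smul_eq_mul]
    ring

/-- the map `φ(r,θ) = (e^{−r/2}cos(θ/2), e^{−r/2}sin(θ/2))` pulls back the
Ricci soliton (Witten black hole) metric `g_Σ = (du² + dv²)/(1 + u² + v²)` to the metric
`g₃ = (1/4)(dr² + dθ²)/(1 + e^r)`. -/
theorem pullback_soliton_to_g3 (φ : ℝ × ℝ → ℝ × ℝ)
    (hφ : φ = fun p =>
      (Real.exp (-p.1 / 2) * Real.cos (p.2 / 2), Real.exp (-p.1 / 2) * Real.sin (p.2 / 2))) :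
    ∀ p : ℝ × ℝ, ∀ w : ℝ × ℝ,
      ((fderiv ℝ φ p w).1 ^ 2 + (fderiv ℝ φ p w).2 ^ 2) / (1 + (φ p).1 ^ 2 + (φ p).2 ^ 2)
        = (1 / 4) * (w.1 ^ 2 + w.2 ^ 2) / (1 + Real.exp p.1) := by
  rintro ⟨r, θ⟩ ⟨α, β⟩
  subst hφ
  rw [(hasFDerivAt_phi r θ).fderiv]
  simp only [ContinuousLinearMap.prod_apply, ContinuousLinearMap.add_apply,
    ContinuousLinearMap.smul_apply, ContinuousLinearMap.coe_fst', ContinuousLinearMap.coe_snd',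
    smul_eq_mul]
  have hc : Real.cos (θ/2) ^ 2 + Real.sin (θ/2) ^ 2 = 1 := by
    rw [add_comm]; exact Real.sin_sq_add_cos_sq _
  have he : Real.exp (-r/2) ^ 2 = Real.exp (-r) := by
    rw [sq, ← Real.exp_add]; ring_nf
  have he2 : Real.exp (-r) * Real.exp r = 1 := by
    rw [← Real.exp_add]; simp
  have hpos : (0:ℝ) < 1 + Real.exp (-r) := by positivity
  have hpos2 : (0:ℝ) < 1 + Real.exp r := by positivity
  have key : (1 : ℝ) + Real.exp (-r/2) ^ 2 * Real.cos (θ/2) ^ 2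
      + Real.exp (-r/2) ^ 2 * Real.sin (θ/2) ^ 2 = 1 + Real.exp (-r) := by
    rw [add_assoc, ← mul_add, hc, mul_one, he]
  have lhs : (-(1/2) * Real.exp (-r/2) * Real.cos (θ/2) * α
        + -(1/2) * Real.exp (-r/2) * Real.sin (θ/2) * β) ^ 2
      + (-(1/2) * Real.exp (-r/2) * Real.sin (θ/2) * α
        + (1/2) * Real.exp (-r/2) * Real.cos (θ/2) * β) ^ 2
      = (1/4) * Real.exp (-r) * (α^2 + β^2) := by
    have : Real.exp (-r/2) ^ 2 * (Real.cos (θ/2)^2 + Real.sin (θ/2)^2) = Real.exp (-r) := by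
      rw [hc, mul_one, he]
    nlinarith [this]
  rw [show (Real.exp (-r / 2) * Real.cos (θ / 2)) ^ 2 = Real.exp (-r/2)^2 * Real.cos (θ/2)^2 by ring,
    show (Real.exp (-r / 2) * Real.sin (θ / 2)) ^ 2 = Real.exp (-r/2)^2 * Real.sin (θ/2)^2 by ring,
    lhs, key]
  rw [div_eq_div_iff hpos.ne' hpos2.ne']
  nlinarith [he2]
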